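/- Let C be a category with finite products and small colimits, with its Cartesian monoidal structure. A small diagram α : K → C is linear (i.e., for every object X the canonical map colim(α × X) → (colim α) × X is an equivalence) if and only if for every morphism X → Y in C, the square with vertices colim(α × X), X, colim(α × Y), Y (horizontal maps induced by projections, vertical maps by X → Y) is Cartesian. -/

import Mathlib

open CategoryTheory CategoryTheory.Limits

universe v u

section Aux

variable {C : Type u} [Category.{v} C] [HasFiniteProducts C] [HasColimits C]
  {K : Type v} [SmallCategory K] (α : K ⥤ C)

lemma post_natural_aux {X Y : C} (f : X ⟶ Y) :
    colimit.post α (prod.functor.obj X) ≫ prod.map f (𝟙 (colimit α)) =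
      colimMap (Functor.whiskerLeft α (prod.functor.map f)) ≫ colimit.post α (prod.functor.obj Y) := by
  apply colimit.hom_ext
  intro j
  erw [colimit.ι_post_assoc, ι_colimMap_assoc, colimit.ι_post]
  simp only [prod.functor_obj_map, prod.functor_map_app, Functor.whiskerLeft_app, Functor.comp_obj]
  erw [prod.map_map, prod.map_map]
  simp
  rfl

omit [HasColimits C] in
lemma isPullback_prodMap_aux {X Y : C} (Z : C) (f : X ⟶ Y) :
    IsPullback (prod.fst : X ⨯ Z ⟶ X) (prod.map f (𝟙 Z)) f (prod.fst : Y ⨯ Z ⟶ Y) := by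
  refine IsPullback.of_bot ?_ (by simp) (IsPullback.of_hasBinaryProduct' (X := Y) (Y := Z))
  have h := IsPullback.of_hasBinaryProduct' (C := C) (X := X) (Y := Z)
  simpa using h

lemma post_snd_aux (X : C) :
    colimit.post α (prod.functor.obj X) ≫ (prod.snd : X ⨯ colimit α ⟶ colimit α) =
      colimMap (Functor.whiskerLeft α (prod.functor.map (terminal.from X))) ≫
        (HasColimit.isoOfNatIso
          (NatIso.ofComponents (fun j => prod.leftUnitor (α.obj j))
            (fun g => by simp; exact prod.map_snd _ _) : α ⋙ prod.functor.obj (⊤_ C) ≅ α)).hom := by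
  apply colimit.hom_ext
  intro j
  simp
  erw [colimit.ι_post_assoc]
  simp only [prod.functor_obj_map]
  erw [prod.map_snd, prod.map_snd_assoc, Category.id_comp]

end Aux

/-- In a category `C` with finite products and small colimits (with its Cartesian monoidal
structure), a small diagram `α : K ⥤ C` is linear — i.e. the canonical comparison map
`colim (X ⨯ α) ⟶ X ⨯ colim α` is an isomorphism for every `X` — if and only if for every
morphism `f : X ⟶ Y` the square with vertices `colim (X ⨯ α)`, `X`, `colim (Y ⨯ α)`, `Y`
(horizontal maps induced by the projections, vertical maps by `f`) is Cartesian. -/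
theorem linear_iff_squares_cartesian {C : Type u} [Category.{v} C]
    [HasFiniteProducts C] [HasColimits C] {K : Type v} [SmallCategory K] (α : K ⥤ C) :
    (∀ X : C, IsIso (colimit.post α (prod.functor.obj X))) ↔
      (∀ {X Y : C} (f : X ⟶ Y),
        IsPullback
          (colimit.post α (prod.functor.obj X) ≫ (prod.fst : X ⨯ colimit α ⟶ X))
          (colimMap (Functor.whiskerLeft α (prod.functor.map f)))
          f
          (colimit.post α (prod.functor.obj Y) ≫ (prod.fst : Y ⨯ colimit α ⟶ Y))) := by
  constructor
  · intro h X Y f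
    haveI := h X
    haveI := h Y
    have sq1 : IsPullback (colimit.post α (prod.functor.obj X))
        (colimMap (Functor.whiskerLeft α (prod.functor.map f))) (prod.map f (𝟙 (colimit α)))
        (colimit.post α (prod.functor.obj Y)) :=
      @IsPullback.of_horiz_isIso _ _ _ _ _ _ _ _ _ _ (h X) (h Y) ⟨post_natural_aux α f⟩
    exact sq1.paste_horiz (isPullback_prodMap_aux (colimit α) f)
  · intro h X
    set T := ⊤_ C
    have P1 := h (terminal.from X)
    set e : colimit (α ⋙ prod.functor.obj T) ≅ colimit α :=
      HasColimit.isoOfNatIso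
        (NatIso.ofComponents (fun j => prod.leftUnitor (α.obj j)) (fun g => by simp; exact prod.map_snd _ _)) with he
    have P2 : IsPullback (prod.fst : X ⨯ colimit (α ⋙ prod.functor.obj T) ⟶ X) prod.snd
        (terminal.from X) (colimit.post α (prod.functor.obj T) ≫ prod.fst) := by
      have := IsPullback.of_hasBinaryProduct' (C := C) (X := X)
        (Y := colimit (α ⋙ prod.functor.obj T))
      convert this using 1
      apply Subsingleton.elim
    set c : colimit (α ⋙ prod.functor.obj X) ⟶ X ⨯ colimit (α ⋙ prod.functor.obj T) :=
      prod.lift (colimit.post α (prod.functor.obj X) ≫ prod.fst)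
        (colimMap (Functor.whiskerLeft α (prod.functor.map (terminal.from X)))) with hc
    have hciso : IsIso c := by
      have : c = (P1.isoIsPullback _ _ P2).hom := by
        apply P2.hom_ext
        · rw [IsPullback.isoIsPullback_hom_fst]; simp [hc]; exact prod.lift_fst _ _
        · rw [IsPullback.isoIsPullback_hom_snd]; simp [hc]; exact prod.lift_snd _ _
      rw [this]
      exact Iso.isIso_hom _
    have key : colimit.post α (prod.functor.obj X) =
        c ≫ (prod.mapIso (Iso.refl X) e).hom := by
      apply Limits.prod.hom_ext
      · simp [hc]; exact (prod.lift_fst _ _).symm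
      · simp only [prod.mapIso_hom, Category.assoc, prod.map_snd, Iso.refl_hom]
        rw [← Category.assoc, hc]
        simp only [prod.lift_snd]
        exact post_snd_aux α X
    rw [key]
    exact @IsIso.comp_isIso _ _ _ _ _ _ _ hciso (Iso.isIso_hom _)
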